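/- Let ρ: ℝ → ℝ be a symmetric (even), convex, coercive, differentiable function, and define the density p(x) = exp(-ρ(x)). Suppose t₀ ∈ ℝ satisfies ρ'(t₀) = α₀ > 0. Then for all t₂ > t₁ ≥ t₀, the conditional tail probability satisfies P(|y| > t₂ | |y| > t₁) ≤ exp(-α₀(t₂ - t₁)), where probability is computed with respect to the (unnormalized) measure with density p. -/

import Mathlib

open MeasureTheory Filter Set

private lemma integral_Ioi_comp_add_right' (f : ℝ → ℝ) (c d : ℝ) :
    ∫ x in Set.Ioi c, f (x + d) = ∫ x in Set.Ioi (c + d), f x := by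
  have A : MeasurableEmbedding (fun x : ℝ => x + d) :=
    (Homeomorph.addRight d).isClosedEmbedding.measurableEmbedding
  have h := A.setIntegral_map (μ := volume) f (Set.Ioi (c + d))
  rw [map_add_right_eq_self] at h
  rw [h]
  congr 1
  ext y
  simp [Set.mem_preimage]

theorem tail_bound_logconcave
    (ρ : ℝ → ℝ) (hsym : ∀ x, ρ (-x) = ρ x) (hconv : ConvexOn ℝ Set.univ ρ)
    (hcoer : Tendsto ρ (cocompact ℝ) atTop)
    (hdiff : Differentiable ℝ ρ)
    (t₀ α₀ : ℝ) (hα : deriv ρ t₀ = α₀) (hα₀ : 0 < α₀)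
    (t₁ t₂ : ℝ) (h₁ : t₀ ≤ t₁) (h₂ : t₁ < t₂) :
    (∫ y in {y : ℝ | t₂ < |y|}, Real.exp (-ρ y)) /
      (∫ y in {y : ℝ | t₁ < |y|}, Real.exp (-ρ y))
      ≤ Real.exp (-α₀ * (t₂ - t₁)) := by
  have hmono : MonotoneOn (deriv ρ) Set.univ :=
    hconv.monotoneOn_deriv (fun x _ => hdiff x)
  have hodd : ∀ x, deriv ρ (-x) = - deriv ρ x := by
    intro x
    have h1 : deriv (fun y => ρ (-y)) x = - deriv ρ (-x) := deriv_comp_neg ρ x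
    have h2 : (fun y => ρ (-y)) = ρ := funext hsym
    rw [h2] at h1
    linarith
  have ht₀pos : 0 < t₀ := by
    by_contra h
    push_neg at h
    have h1 : t₀ ≤ -t₀ := by linarith
    have := hmono (Set.mem_univ t₀) (Set.mem_univ (-t₀)) h1
    rw [hodd t₀, hα] at this
    linarith
  have hderiv_ge : ∀ x, t₀ ≤ x → α₀ ≤ deriv ρ x := by
    intro x hx
    have := hmono (Set.mem_univ t₀) (Set.mem_univ x) hx
    rwa [hα] at this
  -- tangent line bound
  have htan : ∀ y, ρ t₀ + α₀ * (y - t₀) ≤ ρ y := by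
    intro y
    rcases lt_trichotomy y t₀ with h | h | h
    · have hs := hconv.slope_le_deriv (Set.mem_univ y) (Set.mem_univ t₀) h (hdiff t₀)
      rw [hα, slope_def_field] at hs
      have hy : 0 < t₀ - y := by linarith
      rw [div_le_iff₀ hy] at hs
      nlinarith
    · subst h; simp
    · have hs := hconv.deriv_le_slope (Set.mem_univ t₀) (Set.mem_univ y) h (hdiff t₀)
      rw [hα, slope_def_field] at hs
      have hy : 0 < y - t₀ := by linarith
      rw [le_div_iff₀ hy] at hs
      nlinarith
  have pbound : ∀ y, Real.exp (-ρ y) ≤ Real.exp (α₀ * t₀ - ρ t₀) * Real.exp (-α₀ * y) := by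
    intro y
    rw [← Real.exp_add]
    apply Real.exp_le_exp.2
    have := htan y
    nlinarith
  have hcont : Continuous fun y => Real.exp (-ρ y) :=
    Real.continuous_exp.comp hdiff.continuous.neg
  have hIoi : ∀ a : ℝ, IntegrableOn (fun y => Real.exp (-ρ y)) (Set.Ioi a) := by
    intro a
    have hb := (exp_neg_integrableOn_Ioi a hα₀).const_mul (Real.exp (α₀ * t₀ - ρ t₀))
    refine Integrable.mono' hb hcont.aestronglyMeasurable.restrict ?_
    filter_upwards with y
    rw [Real.norm_eq_abs, abs_of_pos (Real.exp_pos _)]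
    exact pbound y
  have hIio : ∀ a : ℝ, IntegrableOn (fun y => Real.exp (-ρ y)) (Set.Iio a) := by
    intro a
    have m : MeasurableEmbedding fun x : ℝ => -x :=
      (Homeomorph.neg ℝ).measurableEmbedding
    rw [show (volume : Measure ℝ) = Measure.map Neg.neg volume from
      (Measure.map_neg_eq_self (volume : Measure ℝ)).symm, m.integrableOn_map_iff]
    simp only [Function.comp_def, hsym, neg_preimage, neg_Iio]
    exact hIoi (-a)
  have hInt : Integrable (fun y => Real.exp (-ρ y)) := by
    have h := (hIio 0).union ((integrableOn_Ici_iff_integrableOn_Ioi).mpr (hIoi 0))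
    rwa [Set.Iio_union_Ici, integrableOn_univ] at h
  -- symmetry of one-sided tails
  have hneg : ∀ t : ℝ, ∫ y in Set.Iio (-t), Real.exp (-ρ y) = ∫ y in Set.Ioi t, Real.exp (-ρ y) := by
    intro t
    have h1 := integral_comp_neg_Iic (-t) (fun y => Real.exp (-ρ y))
    simp only [hsym, neg_neg] at h1
    rw [← integral_Iic_eq_integral_Iio, h1]
  -- split the two-sided tail
  have hsplit : ∀ t : ℝ, 0 ≤ t →
      ∫ y in {y : ℝ | t < |y|}, Real.exp (-ρ y)
        = 2 * ∫ y in Set.Ioi t, Real.exp (-ρ y) := by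
    intro t ht
    have hset : {y : ℝ | t < |y|} = Set.Iio (-t) ∪ Set.Ioi t := by
      ext y
      simp only [Set.mem_setOf_eq, lt_abs, Set.mem_union, Set.mem_Iio, Set.mem_Ioi]
      constructor
      · rintro (h | h)
        · right; exact h
        · left; linarith
      · rintro (h | h)
        · right; linarith
        · left; exact h
    have hdisj : Disjoint (Set.Iio (-t)) (Set.Ioi t) := by
      rw [Set.disjoint_left]
      intro y hy hy'
      simp only [Set.mem_Iio, Set.mem_Ioi] at hy hy'
      linarith
    rw [hset, setIntegral_union hdisj measurableSet_Ioi (hIio (-t)) (hIoi t), hneg t]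
    ring
  have hGpos : 0 < ∫ y in Set.Ioi t₁, Real.exp (-ρ y) := by
    refine (setIntegral_pos_iff_support_of_nonneg_ae ?_ (hIoi t₁)).2 ?_
    · filter_upwards with y using (Real.exp_pos _).le
    · have hsup : Function.support (fun y : ℝ => Real.exp (-ρ y)) = Set.univ := by
        ext y; simp [Real.exp_ne_zero]
      rw [hsup, Set.univ_inter, Real.volume_Ioi]
      simp
  -- shift bound
  have hshift : ∫ y in Set.Ioi t₂, Real.exp (-ρ y)
      ≤ Real.exp (-α₀ * (t₂ - t₁)) * ∫ y in Set.Ioi t₁, Real.exp (-ρ y) := by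
    have he : ∫ y in Set.Ioi t₂, Real.exp (-ρ y)
        = ∫ y in Set.Ioi t₁, Real.exp (-ρ (y + (t₂ - t₁))) := by
      rw [integral_Ioi_comp_add_right' (fun y => Real.exp (-ρ y)) t₁ (t₂ - t₁),
        show t₁ + (t₂ - t₁) = t₂ by ring]
    rw [he, ← integral_const_mul]
    have hint1 : IntegrableOn (fun y => Real.exp (-ρ (y + (t₂ - t₁)))) (Set.Ioi t₁) := by
      have hb := (exp_neg_integrableOn_Ioi t₁ hα₀).const_mul
        (Real.exp (α₀ * t₀ - ρ t₀ - α₀ * (t₂ - t₁)))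
      refine Integrable.mono' hb ?_ ?_
      · exact (Real.continuous_exp.comp
          ((hdiff.continuous.comp (continuous_id.add continuous_const)).neg)).aestronglyMeasurable.restrict
      · filter_upwards with y
        rw [Real.norm_eq_abs, abs_of_pos (Real.exp_pos _)]
        calc Real.exp (-ρ (y + (t₂ - t₁)))
            ≤ Real.exp (α₀ * t₀ - ρ t₀) * Real.exp (-α₀ * (y + (t₂ - t₁))) := pbound _
          _ = Real.exp (α₀ * t₀ - ρ t₀ - α₀ * (t₂ - t₁)) * Real.exp (-α₀ * y) := by
              rw [← Real.exp_add, ← Real.exp_add]; ring_nf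
    refine setIntegral_mono_on hint1 ((hIoi t₁).const_mul _) measurableSet_Ioi ?_
    intro y hy
    rw [← Real.exp_add]
    apply Real.exp_le_exp.2
    have hy' : t₀ ≤ y := le_trans h₁ (le_of_lt hy)
    have hd : α₀ ≤ deriv ρ y := hderiv_ge y hy'
    have hΔ : 0 < t₂ - t₁ := by linarith
    have hs := hconv.deriv_le_slope (Set.mem_univ y) (Set.mem_univ (y + (t₂ - t₁)))
      (by linarith) (hdiff y)
    rw [slope_def_field, show y + (t₂ - t₁) - y = t₂ - t₁ by ring, le_div_iff₀ hΔ] at hs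
    nlinarith
  have ht₁ : (0 : ℝ) ≤ t₁ := le_trans ht₀pos.le h₁
  have ht₂ : (0 : ℝ) ≤ t₂ := by linarith
  rw [hsplit t₁ ht₁, hsplit t₂ ht₂, div_le_iff₀ (by positivity)]
  nlinarith [hshift, Real.exp_pos (-α₀ * (t₂ - t₁))]
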